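/- Under the hypotheses of the Multiplicative Law (A a commutative ring, S ⊆ A an archimedean subsemiring, G an A-module, M an S-subsemimodule of G, u ∈ M an order unit), for each pure state φ of (G, M, u) the map a ↦ φ(a·u) : A → ℝ is a ring homomorphism. -/

import Mathlib

/-- A state of `(G, M, u)`. -/
def IsState {G : Type*} [AddCommGroup G] (M : AddSubmonoid G) (u : G) (φ : G →+ ℝ) : Prop :=
  (∀ m ∈ M, 0 ≤ φ m) ∧ φ u = 1

/-- A pure state of `(G, M, u)`. -/
def IsPureState {G : Type*} [AddCommGroup G] (M : AddSubmonoid G) (u : G) (φ : G →+ ℝ) : Prop :=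
  IsState M u φ ∧ ∀ φ₁ φ₂ : G →+ ℝ, IsState M u φ₁ → IsState M u φ₂ →
    φ + φ = φ₁ + φ₂ → φ₁ = φ ∧ φ₂ = φ

/-- For a pure state `φ`, the map `a ↦ φ (a • u)` is a ring homomorphism `A → ℝ`. -/
theorem pure_state_gives_ring_hom {A : Type*} [CommRing A] {G : Type*} [AddCommGroup G]
    [Module A G]
    (S : Subsemiring A) (harch : ∀ a : A, ∃ k : ℤ, (k : A) + a ∈ S)
    (M : AddSubmonoid G) (hSM : ∀ s ∈ S, ∀ m ∈ M, s • m ∈ M)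
    (u : G) (hu : u ∈ M)
    (horder : ∀ g : G, ∃ (k : ℤ) (m : G), m ∈ M ∧ g = m + k • u)
    (φ : G →+ ℝ) (hφ : IsPureState M u φ) :
    ∃ χ : A →+* ℝ, ∀ a : A, χ a = φ (a • u) := by
  obtain ⟨⟨hpos, hu1⟩, hext⟩ := hφ
  -- scalar combination lemma
  have hksum : ∀ s t : A, ∀ k : ℤ, (k : A) = s + t → ∀ g : G,
      φ (s • g) + φ (t • g) = (k : ℝ) * φ g := by
    intro s t k hk g
    have h1 : s • g + t • g = (k : A) • g := by rw [hk, add_smul]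
    have h2 : ((k : A)) • g = k • g := Int.cast_smul_eq_zsmul A k g
    calc φ (s • g) + φ (t • g) = φ (s • g + t • g) := (map_add φ _ _).symm
      _ = φ (k • g) := by rw [h1, h2]
      _ = (k : ℝ) * φ g := by rw [map_zsmul]; simp [zsmul_eq_mul]
  -- the zero case
  have hzero : ∀ s ∈ S, φ (s • u) = 0 → ∀ g : G, φ (s • g) = 0 := by
    intro s hs h0
    have hnn : ∀ g : G, 0 ≤ φ (s • g) := by
      intro g
      obtain ⟨k, m, hm, rfl⟩ := horder g
      have h1 : s • (m + k • u) = s • m + k • (s • u) := by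
        rw [smul_add]
        congr 1
        rw [← Int.cast_smul_eq_zsmul A k u, ← mul_smul, mul_comm, mul_smul,
          Int.cast_smul_eq_zsmul]
      rw [h1, map_add, map_zsmul, h0]
      simpa using hpos _ (hSM s hs m hm)
    intro g
    have h2 := hnn g
    have h3 := hnn (-g)
    rw [smul_neg, map_neg] at h3
    linarith
  -- the extremality argument
  have aux : ∀ s ∈ S, ∀ t ∈ S, ∀ k : ℤ, (k : A) = s + t →
      0 < φ (s • u) → 0 < φ (t • u) → φ (s • u) ≤ φ (t • u) →
      ∀ g : G, φ (t • g) = φ (t • u) * φ g := by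
    intro s hs t ht k hk hlpos hmpos hle
    set lam := φ (s • u) with hlam
    set mu := φ (t • u) with hmu
    have hkval : (k : ℝ) = lam + mu := by
      have := hksum s t k hk u
      rw [hu1, mul_one] at this
      linarith
    have hkpos : (0 : ℝ) < (k : ℝ) := by rw [hkval]; linarith
    have hcnn : (0 : ℝ) ≤ 1 - 2 * lam / (k : ℝ) := by
      rw [sub_nonneg, div_le_one hkpos, hkval]; linarith
    -- the two states
    set φ₂ : G →+ ℝ := AddMonoidHom.mk' (fun g => φ (t • g) / mu) (by
      intro a b; simp [smul_add, add_div]) with hφ₂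
    set φ₁ : G →+ ℝ := AddMonoidHom.mk' (fun g =>
        (2 / (k : ℝ)) * φ (s • g) + ((1 - 2 * lam / (k : ℝ)) / mu) * φ (t • g)) (by
      intro a b; simp [smul_add]; ring) with hφ₁
    have hstate2 : IsState M u φ₂ := by
      constructor
      · intro m hm
        exact div_nonneg (hpos _ (hSM t ht m hm)) hmpos.le
      · show φ (t • u) / mu = 1
        rw [← hmu, div_self hmpos.ne']
    have hstate1 : IsState M u φ₁ := by
      constructor
      · intro m hm
        have h1 : 0 ≤ φ (s • m) := hpos _ (hSM s hs m hm)
        have h2 : 0 ≤ φ (t • m) := hpos _ (hSM t ht m hm)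
        have : (0:ℝ) ≤ 2 / (k : ℝ) := by positivity
        have : (0:ℝ) ≤ (1 - 2 * lam / (k : ℝ)) / mu := div_nonneg hcnn hmpos.le
        show 0 ≤ (2 / (k : ℝ)) * φ (s • m) + ((1 - 2 * lam / (k : ℝ)) / mu) * φ (t • m)
        positivity
      · show (2 / (k : ℝ)) * φ (s • u) + ((1 - 2 * lam / (k : ℝ)) / mu) * φ (t • u) = 1
        rw [← hlam, ← hmu]
        field_simp
        ring
    have hsum : φ + φ = φ₁ + φ₂ := by
      ext g
      have hg := hksum s t k hk g
      show φ g + φ g = ((2 / (k : ℝ)) * φ (s • g)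
        + ((1 - 2 * lam / (k : ℝ)) / mu) * φ (t • g)) + φ (t • g) / mu
      have hT : φ (s • g) = (k : ℝ) * φ g - φ (t • g) := by linarith
      have hL : lam = (k : ℝ) - mu := by linarith
      rw [hT, hL]
      field_simp
      ring
    obtain ⟨-, h2⟩ := hext φ₁ φ₂ hstate1 hstate2 hsum
    intro g
    have := DFunLike.congr_fun h2 g
    have h3 : φ (t • g) / mu = φ g := this
    field_simp at h3
    linarith
  -- key multiplicative lemma for S
  have key : ∀ s ∈ S, ∀ g : G, φ (s • g) = φ (s • u) * φ g := by
    intro s hs g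
    obtain ⟨k, hkS⟩ := harch (-s)
    set t : A := (k : A) + -s with htdef
    have hk : (k : A) = s + t := by rw [htdef]; ring
    have hlnn : 0 ≤ φ (s • u) := hpos _ (hSM s hs u hu)
    have hmnn : 0 ≤ φ (t • u) := hpos _ (hSM t hkS u hu)
    have hgu := hksum s t k hk u
    have hgg := hksum s t k hk g
    rw [hu1, mul_one] at hgu
    rcases eq_or_lt_of_le hlnn with h0 | hlpos
    · rw [hzero s hs h0.symm g, ← h0]; ring
    rcases eq_or_lt_of_le hmnn with h0 | hmpos
    · have h1 := hzero t hkS h0.symm g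
      have h2 : φ (s • u) = (k : ℝ) := by linarith
      rw [h2]; linarith
    rcases le_total (φ (s • u)) (φ (t • u)) with hle | hle
    · have h1 := aux s hs t hkS k hk hlpos hmpos hle g
      have h2 : φ (s • u) = (k : ℝ) - φ (t • u) := by linarith
      rw [h2]; rw [h1] at hgg; linarith [hgg]
    · have hk' : (k : A) = t + s := by rw [hk]; ring
      exact aux t hkS s hs k hk' hmpos hlpos hle g
  -- extend to all of A
  have key' : ∀ a : A, ∀ g : G, φ (a • g) = φ (a • u) * φ g := by
    intro a g
    obtain ⟨k, hkS⟩ := harch a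
    have h1 := key _ hkS g
    have hsplit : ∀ x : G, φ (((k : A) + a) • x) = (k : ℝ) * φ x + φ (a • x) := by
      intro x
      rw [add_smul, map_add, Int.cast_smul_eq_zsmul A k x, map_zsmul]
      simp [zsmul_eq_mul]
    rw [hsplit g, hsplit u, hu1] at h1
    linear_combination h1
  refine ⟨{ toFun := fun a => φ (a • u)
            map_one' := by simp [hu1]
            map_mul' := by
              intro a b
              show φ ((a * b) • u) = φ (a • u) * φ (b • u)
              rw [mul_smul]
              exact key' a (b • u)
            map_zero' := by simp
            map_add' := by intro a b; simp [add_smul] }, fun a => rfl⟩
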